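/- Let q > 1 be a real number. Define M_n := (q^{n+1} − 1)/(q − 1) for n ≥ 0, and let (A_h)_{h≥0} be the (unique, since M₀ = 1) sequence of real numbers satisfying ∑_{h=0}^{n} M_{n−h}·A_h = M_n² for every n ≥ 0. Then A₀ = 1 and A_h = q^{2h} + q^{2h−1} for every h ≥ 1. -/

import Mathlib

/-- For the projective line: with `Mₙ = (q^{n+1}−1)/(q−1)` and `A_h` defined by the
convolution identity `∑_{h≤n} M_{n−h}·A_h = Mₙ²`, one has `A₀ = 1` and
`A_h = q^{2h} + q^{2h−1}` for all `h ≥ 1`. -/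
theorem stmt_17 (q : ℝ) (hq : 1 < q)
    (M : ℕ → ℝ) (hM : ∀ n : ℕ, M n = (q ^ (n + 1) - 1) / (q - 1))
    (A : ℕ → ℝ)
    (hA : ∀ n : ℕ, ∑ h ∈ Finset.range (n + 1), M (n - h) * A h = (M n) ^ 2) :
    A 0 = 1 ∧ ∀ h : ℕ, 1 ≤ h → A h = q ^ (2 * h) + q ^ (2 * h - 1) := by
  have hq0 : q - 1 ≠ 0 := by linarith
  set B : ℕ → ℝ := fun h => match h with
    | 0 => 1
    | k + 1 => q ^ (2 * k + 2) + q ^ (2 * k + 1) with hB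
  have hM0 : M 0 = 1 := by rw [hM]; simp; field_simp; exact hq0
  have hMsucc : ∀ k : ℕ, M (k + 1) = q * M k + 1 := by
    intro k
    rw [hM, hM]
    field_simp
    ring
  have sumB : ∀ n : ℕ, ∑ h ∈ Finset.range (n + 1), B h = (q ^ (2 * n + 1) - 1) / (q - 1) := by
    intro n
    induction n with
    | zero => simp [hB]; field_simp
    | succ m ih =>
      rw [Finset.sum_range_succ, ih]
      show _ + (q ^ (2 * m + 2) + q ^ (2 * m + 1)) = _
      have : 2 * (m + 1) + 1 = 2 * m + 3 := by ring
      rw [this]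
      field_simp
      ring
  have key : ∀ n : ℕ, ∑ h ∈ Finset.range (n + 1), M (n - h) * B h = (M n) ^ 2 := by
    intro n
    induction n with
    | zero => simp [hB, hM0]
    | succ m ih =>
      rw [Finset.sum_range_succ]
      have h1 : ∀ h ∈ Finset.range (m + 1), M (m + 1 - h) * B h = (q * M (m - h) + 1) * B h := by
        intro h hh
        simp only [Finset.mem_range] at hh
        have hle : h ≤ m := Nat.lt_succ_iff.mp hh
        have : m + 1 - h = (m - h) + 1 := by omega
        rw [this, hMsucc]
      rw [Finset.sum_congr rfl h1]
      have h2 : ∑ h ∈ Finset.range (m + 1), (q * M (m - h) + 1) * B h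
          = q * (∑ h ∈ Finset.range (m + 1), M (m - h) * B h)
            + ∑ h ∈ Finset.range (m + 1), B h := by
        rw [Finset.mul_sum, ← Finset.sum_add_distrib]
        exact Finset.sum_congr rfl fun h _ => by ring
      rw [h2, ih, sumB]
      simp only [Nat.sub_self, hM0, one_mul]
      show q * M m ^ 2 + (q ^ (2 * m + 1) - 1) / (q - 1) + (q ^ (2 * m + 2) + q ^ (2 * m + 1))
          = M (m + 1) ^ 2
      rw [hM, hM]
      field_simp
      ring
  have hAB : ∀ n : ℕ, A n = B n := by
    intro n
    induction n using Nat.strong_induction_on with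
    | _ n ih =>
      have e1 := hA n
      have e2 := key n
      rw [Finset.sum_range_succ] at e1 e2
      have h3 : ∑ h ∈ Finset.range n, M (n - h) * A h
          = ∑ h ∈ Finset.range n, M (n - h) * B h := by
        refine Finset.sum_congr rfl fun h hh => ?_
        rw [ih h (Finset.mem_range.mp hh)]
      rw [h3] at e1
      have h4 : M (n - n) * A n = M (n - n) * B n := by linarith
      simpa [Nat.sub_self, hM0] using h4
  constructor
  · rw [hAB 0]
  · intro h hh
    obtain ⟨k, rfl⟩ := Nat.exists_eq_add_of_le hh
    have hk : 1 + k = k + 1 := by omega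
    rw [hk, hAB]
    show q ^ (2 * k + 2) + q ^ (2 * k + 1) = _
    have e1 : 2 * (k + 1) = 2 * k + 2 := by ring
    have e2 : 2 * (k + 1) - 1 = 2 * k + 1 := by omega
    rw [e1]
    have e3 : 2 * k + 2 - 1 = 2 * k + 1 := by omega
    rw [e3]
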